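/- There exist disjoint point sets R and B in the plane with |R| = |B| = 3 such that, for every max-sum bichromatic matching E of R and B, the intersection of the three disks {D_{pq} : (p,q) ∈ E} is empty. -/
import Mathlib


noncomputable section

/-- Points of the plane with the Euclidean norm. -/
abbrev Pt : Type := EuclideanSpace ℝ (Fin 2)

/-- The closed disk with diameter the segment `pq`: center `(p+q)/2`, radius `‖p-q‖/2`. -/
def disk (p q : Pt) : Set Pt := Metric.closedBall (midpoint ℝ p q) (dist p q / 2)


/-- Total Euclidean length of the bichromatic matching that matches `p ∈ R` with `f p`. -/
def bmCost (R : Finset Pt) (f : Pt → Pt) : ℝ := ∑ p ∈ R, dist p (f p)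

/-- `f` is a max-sum bichromatic matching of `R` and `B`: it is a bijection from `R` onto `B`
maximizing the total Euclidean distance of matched pairs. -/
def IsMaxSumBichromatic (R B : Finset Pt) (f : Pt → Pt) : Prop :=
  Set.BijOn f ↑R ↑B ∧ ∀ g : Pt → Pt, Set.BijOn g ↑R ↑B → bmCost R g ≤ bmCost R f

/- ---------- auxiliary material ---------- -/

/-- Constructor for points of the plane. -/
def mk2 (a b : ℝ) : Pt := (WithLp.equiv 2 (Fin 2 → ℝ)).symm ![a, b]

lemma mk2_apply0 (a b : ℝ) : mk2 a b 0 = a := by simp [mk2]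

lemma mk2_apply1 (a b : ℝ) : mk2 a b 1 = b := by simp [mk2]

lemma mk2_ne {a b c d : ℝ} (h : a ≠ c) : mk2 a b ≠ mk2 c d := by
  intro he
  exact h (by simpa [mk2_apply0] using congrArg (fun v : Pt => v 0) he)

lemma dist_mk2 (a b c d : ℝ) :
    dist (mk2 a b) (mk2 c d) = Real.sqrt ((a - c) ^ 2 + (b - d) ^ 2) := by
  rw [EuclideanSpace.dist_eq]
  simp [mk2, Fin.sum_univ_two, Real.dist_eq, sq_abs]

lemma midpoint_apply (p q : Pt) (i : Fin 2) : midpoint ℝ p q i = (p i + q i) / 2 := by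
  rw [midpoint_eq_smul_add, PiLp.smul_apply, PiLp.add_apply, smul_eq_mul, invOf_eq_inv]
  ring

/-- Quadratic form of membership in `disk p q`. -/
lemma disk_quad {p q x : Pt} (h : x ∈ disk p q) :
    (x 0) ^ 2 + (x 1) ^ 2 - (x 0) * (p 0 + q 0) - (x 1) * (p 1 + q 1)
      + (p 0 * q 0 + p 1 * q 1) ≤ 0 := by
  have h3 : dist x (midpoint ℝ p q) ≤ dist p q / 2 := Metric.mem_closedBall.mp h
  have h1 : dist x (midpoint ℝ p q)
      = Real.sqrt ((x 0 - (p 0 + q 0) / 2) ^ 2 + (x 1 - (p 1 + q 1) / 2) ^ 2) := by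
    rw [EuclideanSpace.dist_eq, Fin.sum_univ_two, midpoint_apply, midpoint_apply]
    simp [Real.dist_eq, sq_abs]
  have h2 : dist p q = Real.sqrt ((p 0 - q 0) ^ 2 + (p 1 - q 1) ^ 2) := by
    rw [EuclideanSpace.dist_eq, Fin.sum_univ_two]
    simp [Real.dist_eq, sq_abs]
  rw [h1, h2] at h3
  have hA : (0:ℝ) ≤ (x 0 - (p 0 + q 0) / 2) ^ 2 + (x 1 - (p 1 + q 1) / 2) ^ 2 := by positivity
  have hB : (0:ℝ) ≤ (p 0 - q 0) ^ 2 + (p 1 - q 1) ^ 2 := by positivity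
  have hA' := Real.sq_sqrt hA
  have hB' := Real.sq_sqrt hB
  have hAnn := Real.sqrt_nonneg ((x 0 - (p 0 + q 0) / 2) ^ 2 + (x 1 - (p 1 + q 1) / 2) ^ 2)
  have hBnn := Real.sqrt_nonneg ((p 0 - q 0) ^ 2 + (p 1 - q 1) ^ 2)
  nlinarith [h3, hA', hB', hAnn, hBnn]

set_option maxHeartbeats 2000000 in
/-- There are disjoint 3-point sets R and B such that for every max-sum bichromatic
matching, the three disks of the matching have empty intersection. -/
theorem stmt2 :
    ∃ R B : Finset Pt, Disjoint R B ∧ R.card = 3 ∧ B.card = 3 ∧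
      ∀ f : Pt → Pt, IsMaxSumBichromatic R B f →
        (⋂ p ∈ (R : Set Pt), disk p (f p)) = ∅ := by
  classical
  -- the six points
  set r1 : Pt := mk2 (-1) 0 with hr1def
  set r2 : Pt := mk2 (-3) (-2) with hr2def
  set r3 : Pt := mk2 5 4 with hr3def
  set b1 : Pt := mk2 0 0 with hb1def
  set b2 : Pt := mk2 (-4) 4 with hb2def
  set b3 : Pt := mk2 1 (-1) with hb3def
  -- all six x-coordinates are distinct, so all pairwise distinctness facts follow
  have ne_r1r2 : r1 ≠ r2 := mk2_ne (by norm_num)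
  have ne_r1r3 : r1 ≠ r3 := mk2_ne (by norm_num)
  have ne_r2r3 : r2 ≠ r3 := mk2_ne (by norm_num)
  have ne_b1b2 : b1 ≠ b2 := mk2_ne (by norm_num)
  have ne_b1b3 : b1 ≠ b3 := mk2_ne (by norm_num)
  have ne_b2b3 : b2 ≠ b3 := mk2_ne (by norm_num)
  have ne_r1b1 : r1 ≠ b1 := mk2_ne (by norm_num)
  have ne_r1b2 : r1 ≠ b2 := mk2_ne (by norm_num)
  have ne_r1b3 : r1 ≠ b3 := mk2_ne (by norm_num)
  have ne_r2b1 : r2 ≠ b1 := mk2_ne (by norm_num)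
  have ne_r2b2 : r2 ≠ b2 := mk2_ne (by norm_num)
  have ne_r2b3 : r2 ≠ b3 := mk2_ne (by norm_num)
  have ne_r3b1 : r3 ≠ b1 := mk2_ne (by norm_num)
  have ne_r3b2 : r3 ≠ b2 := mk2_ne (by norm_num)
  have ne_r3b3 : r3 ≠ b3 := mk2_ne (by norm_num)
  refine ⟨{r1, r2, r3}, {b1, b2, b3}, ?_, ?_, ?_, ?_⟩
  · rw [Finset.disjoint_left]
    intro a ha hb
    simp only [Finset.mem_insert, Finset.mem_singleton] at ha hb
    rcases ha with h | h | h <;> rcases hb with h' | h' | h' <;>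
      first
        | exact ne_r1b1 (h ▸ h' ▸ rfl)
        | exact ne_r1b2 (h ▸ h' ▸ rfl)
        | exact ne_r1b3 (h ▸ h' ▸ rfl)
        | exact ne_r2b1 (h ▸ h' ▸ rfl)
        | exact ne_r2b2 (h ▸ h' ▸ rfl)
        | exact ne_r2b3 (h ▸ h' ▸ rfl)
        | exact ne_r3b1 (h ▸ h' ▸ rfl)
        | exact ne_r3b2 (h ▸ h' ▸ rfl)
        | exact ne_r3b3 (h ▸ h' ▸ rfl)
  · rw [Finset.card_insert_of_notMem (by simp [ne_r1r2, ne_r1r3]),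
      Finset.card_insert_of_notMem (by simp [ne_r2r3]), Finset.card_singleton]
  · rw [Finset.card_insert_of_notMem (by simp [ne_b1b2, ne_b1b3]),
      Finset.card_insert_of_notMem (by simp [ne_b2b3]), Finset.card_singleton]
  intro f ⟨hbij, hmax⟩
  -- the nine distances
  have d11 : dist r1 b1 = 1 := by
    rw [hr1def, hb1def, dist_mk2]; norm_num
  have d12 : dist r1 b2 = 5 := by
    rw [hr1def, hb2def, dist_mk2]
    rw [show ((-1:ℝ) - -4) ^ 2 + (0 - 4) ^ 2 = 5 ^ 2 by norm_num, Real.sqrt_sq (by norm_num)]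
  have d13 : dist r1 b3 = Real.sqrt 5 := by
    rw [hr1def, hb3def, dist_mk2]; norm_num
  have d21 : dist r2 b1 = Real.sqrt 13 := by
    rw [hr2def, hb1def, dist_mk2]; norm_num
  have d22 : dist r2 b2 = Real.sqrt 37 := by
    rw [hr2def, hb2def, dist_mk2]; norm_num
  have d23 : dist r2 b3 = Real.sqrt 17 := by
    rw [hr2def, hb3def, dist_mk2]; norm_num
  have d31 : dist r3 b1 = Real.sqrt 41 := by
    rw [hr3def, hb1def, dist_mk2]; norm_num
  have d32 : dist r3 b2 = 9 := by
    rw [hr3def, hb2def, dist_mk2]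
    rw [show ((5:ℝ) - -4) ^ 2 + (4 - 4) ^ 2 = 9 ^ 2 by norm_num, Real.sqrt_sq (by norm_num)]
  have d33 : dist r3 b3 = Real.sqrt 41 := by
    rw [hr3def, hb3def, dist_mk2]; norm_num
  -- rational bounds on the irrational distances
  have s5u : Real.sqrt 5 < 2.24 := (Real.sqrt_lt' (by norm_num)).mpr (by norm_num)
  have s13u : Real.sqrt 13 < 3.61 := (Real.sqrt_lt' (by norm_num)).mpr (by norm_num)
  have s17l : (4.12:ℝ) < Real.sqrt 17 := (Real.lt_sqrt (by norm_num)).mpr (by norm_num)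
  have s17u : Real.sqrt 17 < 4.13 := (Real.sqrt_lt' (by norm_num)).mpr (by norm_num)
  have s37u : Real.sqrt 37 < 6.09 := (Real.sqrt_lt' (by norm_num)).mpr (by norm_num)
  have s41l : (6.40:ℝ) < Real.sqrt 41 := (Real.lt_sqrt (by norm_num)).mpr (by norm_num)
  -- cost expansion
  have hcost : ∀ g : Pt → Pt,
      bmCost {r1, r2, r3} g = dist r1 (g r1) + dist r2 (g r2) + dist r3 (g r3) := by
    intro g
    rw [bmCost, Finset.sum_insert (by simp [ne_r1r2, ne_r1r3]),
      Finset.sum_insert (by simp [ne_r2r3]), Finset.sum_singleton]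
    ring
  -- the optimal matching
  set g0 : Pt → Pt := fun x => if x = r1 then b2 else if x = r2 then b3 else b1 with hg0def
  have hg01 : g0 r1 = b2 := by simp [hg0def]
  have hg02 : g0 r2 = b3 := by simp [hg0def, ne_r1r2.symm]
  have hg03 : g0 r3 = b1 := by simp [hg0def, ne_r1r3.symm, ne_r2r3.symm]
  have memR : ∀ x : Pt, x ∈ (({r1, r2, r3} : Finset Pt) : Set Pt) ↔
      x = r1 ∨ x = r2 ∨ x = r3 := by intro x; simp
  have memB : ∀ x : Pt, x ∈ (({b1, b2, b3} : Finset Pt) : Set Pt) ↔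
      x = b1 ∨ x = b2 ∨ x = b3 := by intro x; simp
  have hg0bij : Set.BijOn g0 (({r1, r2, r3} : Finset Pt) : Set Pt)
      (({b1, b2, b3} : Finset Pt) : Set Pt) := by
    refine ⟨?_, ?_, ?_⟩
    · intro x hx
      rcases (memR x).mp hx with h | h | h <;> subst h <;>
        simp [hg01, hg02, hg03]
    · intro x hx y hy hxy
      rcases (memR x).mp hx with h | h | h <;> subst h <;>
        rcases (memR y).mp hy with h' | h' | h' <;> subst h' <;>
        simp only [hg01, hg02, hg03] at hxy <;>
        first
          | rfl
          | exact absurd hxy ne_b2b3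
          | exact absurd hxy ne_b2b3.symm
          | exact absurd hxy ne_b1b2
          | exact absurd hxy ne_b1b2.symm
          | exact absurd hxy ne_b1b3
          | exact absurd hxy ne_b1b3.symm
    · intro y hy
      rcases (memB y).mp hy with h | h | h <;> subst h
      · exact ⟨r3, (memR r3).mpr (Or.inr (Or.inr rfl)), hg03⟩
      · exact ⟨r1, (memR r1).mpr (Or.inl rfl), hg01⟩
      · exact ⟨r2, (memR r2).mpr (Or.inr (Or.inl rfl)), hg02⟩
  have hkey : bmCost {r1, r2, r3} g0 ≤ bmCost {r1, r2, r3} f := hmax g0 hg0bij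
  have hcostg0 : bmCost {r1, r2, r3} g0 = 5 + Real.sqrt 17 + Real.sqrt 41 := by
    rw [hcost, hg01, hg02, hg03, d12, d23, d31]
  rw [hcostg0, hcost] at hkey
  -- identify the images of f
  have hf1 := (memB _).mp (hbij.1 ((memR r1).mpr (Or.inl rfl)))
  have hf2 := (memB _).mp (hbij.1 ((memR r2).mpr (Or.inr (Or.inl rfl))))
  have hf3 := (memB _).mp (hbij.1 ((memR r3).mpr (Or.inr (Or.inr rfl))))
  have hfne12 : f r1 ≠ f r2 := fun h =>
    ne_r1r2 (hbij.2.1 ((memR r1).mpr (Or.inl rfl)) ((memR r2).mpr (Or.inr (Or.inl rfl))) h)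
  have hfne13 : f r1 ≠ f r3 := fun h =>
    ne_r1r3 (hbij.2.1 ((memR r1).mpr (Or.inl rfl)) ((memR r3).mpr (Or.inr (Or.inr rfl))) h)
  have hfne23 : f r2 ≠ f r3 := fun h =>
    ne_r2r3 (hbij.2.1 ((memR r2).mpr (Or.inr (Or.inl rfl))) ((memR r3).mpr (Or.inr (Or.inr rfl))) h)
  rcases hf1 with h1 | h1 | h1 <;> rcases hf2 with h2 | h2 | h2 <;> rcases hf3 with h3 | h3 | h3 <;>
    first
      | exact absurd (h1.trans h2.symm) hfne12
      | exact absurd (h1.trans h3.symm) hfne13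
      | exact absurd (h2.trans h3.symm) hfne23
      | (exfalso
         rw [h1, h2, h3] at hkey
         simp only [d11, d12, d13, d21, d22, d23, d31, d32, d33] at hkey
         linarith)
      | -- the optimal case: f r1 = b2, f r2 = b3, f r3 = b1
        (rw [Set.eq_empty_iff_forall_notMem]
         intro x hx
         rw [Set.mem_iInter₂] at hx
         have m1 := hx r1 ((memR r1).mpr (Or.inl rfl))
         have m2 := hx r2 ((memR r2).mpr (Or.inr (Or.inl rfl)))
         have m3 := hx r3 ((memR r3).mpr (Or.inr (Or.inr rfl)))
         rw [h1] at m1; rw [h2] at m2; rw [h3] at m3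
         have q1 := disk_quad m1
         have q2 := disk_quad m2
         have q3 := disk_quad m3
         simp only [hr1def, hr2def, hr3def, hb1def, hb2def, hb3def,
           mk2_apply0, mk2_apply1] at q1 q2 q3
         nlinarith [q1, q2, q3, sq_nonneg (x 0 + 1/3), sq_nonneg (x 1 - 5/6)])
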